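/- Let p be a prime and let α, s, t ∈ ℕ satisfy p^α = sf + tg. Then in ℤⁿ one has p^α·wₙ = (sg + t(2g−f))·(v₁ + ⋯ + v_{n−1}) + (s((n−1)g−(n−2)f) + t(ng−(n−1)f))·vₙ + tg(f−g)·(w₁ + ⋯ + w_{n−1}), all coefficients being nonnegative integers; consequently the binomial F_{n,p} belongs to ker φ. -/

import Mathlib

open MvPolynomial

/-- In the setting of the paper (`n ≥ 3`, coprime `f > g > 0`,
`(n-1)f ≤ ng`), for a prime `p` and `α, s, t ∈ ℕ` with `p^α = sf + tg`, one has
`p^α·wₙ = (sg+t(2g−f))(v₁+⋯+v_{n-1}) + (s((n−1)g−(n−2)f)+t(ng−(n−1)f))·vₙ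
+ tg(f−g)(w₁+⋯+w_{n-1})` in `ℤⁿ`, all coefficients being nonnegative; consequently the
binomial `F_{n,p}` lies in `ker φ`. -/
theorem stmt8 (n : ℕ) (hn : 3 ≤ n) (f g : ℕ) (hco : Nat.Coprime f g)
    (hg : 0 < g) (hgf : g < f) (hng : (n - 1) * f ≤ n * g)
    (v : Fin n → Fin n → ℤ)
    (hv : ∀ i : Fin n, v i = Pi.single i ((f * g : ℕ) : ℤ))
    (w : Fin (n - 1) → Fin n → ℤ)
    (hw : ∀ i : Fin (n - 1), w i = ((f : ℤ) - (g : ℤ)) •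
      (Pi.single (Fin.castLE (by omega) i) (1 : ℤ) +
        Pi.single (⟨n - 1, by omega⟩ : Fin n) (1 : ℤ)))
    (wn : Fin n → ℤ)
    (hwn : wn = (g : ℤ) ^ 2 •
        (∑ i : Fin (n - 1), Pi.single (Fin.castLE (by omega) i) (1 : ℤ) : Fin n → ℤ) +
      ((g : ℤ) * (((n : ℤ) - 1) * (g : ℤ) - ((n : ℤ) - 2) * (f : ℤ))) •
        Pi.single (⟨n - 1, by omega⟩ : Fin n) (1 : ℤ))
    (K : Type*) [Field K]
    (φ : MvPolynomial (Fin n ⊕ Fin n) K →ₐ[K] MvPolynomial (Fin n) K)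
    (hφx : ∀ i : Fin n, φ (X (Sum.inl i)) = X i ^ (f * g))
    (hφy : ∀ i : Fin (n - 1), φ (X (Sum.inr (Fin.castLE (by omega) i))) =
      X (Fin.castLE (by omega) i : Fin n) ^ (f - g) * X (⟨n - 1, by omega⟩ : Fin n) ^ (f - g))
    (hφyn : φ (X (Sum.inr (⟨n - 1, by omega⟩ : Fin n))) =
      (∏ i : Fin (n - 1), X (Fin.castLE (by omega) i : Fin n) ^ g ^ 2) *
        X (⟨n - 1, by omega⟩ : Fin n) ^ (g * ((n - 1) * g - (n - 2) * f)))
    (p : ℕ) (hp : p.Prime) (α s t : ℕ) (hpst : p ^ α = s * f + t * g) :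
    ((p ^ α : ℕ) : ℤ) • wn =
        ((s : ℤ) * (g : ℤ) + (t : ℤ) * (2 * (g : ℤ) - (f : ℤ))) •
          (∑ i : Fin (n - 1), v (Fin.castLE (by omega) i)) +
        ((s : ℤ) * (((n : ℤ) - 1) * (g : ℤ) - ((n : ℤ) - 2) * (f : ℤ)) +
          (t : ℤ) * ((n : ℤ) * (g : ℤ) - ((n : ℤ) - 1) * (f : ℤ))) • v ⟨n - 1, by omega⟩ +
        ((t : ℤ) * (g : ℤ) * ((f : ℤ) - (g : ℤ))) • (∑ i : Fin (n - 1), w i) ∧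
    0 ≤ (s : ℤ) * (g : ℤ) + (t : ℤ) * (2 * (g : ℤ) - (f : ℤ)) ∧
    0 ≤ (s : ℤ) * (((n : ℤ) - 1) * (g : ℤ) - ((n : ℤ) - 2) * (f : ℤ)) +
        (t : ℤ) * ((n : ℤ) * (g : ℤ) - ((n : ℤ) - 1) * (f : ℤ)) ∧
    0 ≤ (t : ℤ) * (g : ℤ) * ((f : ℤ) - (g : ℤ)) ∧
    (X (Sum.inr (⟨n - 1, by omega⟩ : Fin n)) ^ (p ^ α) -
        (∏ i : Fin (n - 1), X (Sum.inl (Fin.castLE (by omega) i : Fin n))) ^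
            (s * g + t * (2 * g - f)) *
          X (Sum.inl (⟨n - 1, by omega⟩ : Fin n)) ^
            (s * ((n - 1) * g - (n - 2) * f) + t * (n * g - (n - 1) * f)) *
          (∏ i : Fin (n - 1), X (Sum.inr (Fin.castLE (by omega) i : Fin n))) ^
            (t * g * (f - g)) :
      MvPolynomial (Fin n ⊕ Fin n) K) ∈ RingHom.ker φ := by
  -- basic inequalities
  have hngZ : ((n:ℤ) - 1) * f ≤ (n:ℤ) * g := by
    have h1 : 1 ≤ n := by omega
    zify [h1] at hng; exact hng
  have h2g : f ≤ 2 * g := by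
    have key : 2 * ((f:ℤ) - g) ≤ g := by
      nlinarith [mul_nonneg (show (0:ℤ) ≤ (n:ℤ) - 3 by omega)
        (show (0:ℤ) ≤ (f:ℤ) - g by omega)]
    omega
  have h2 : (n - 2) * f ≤ (n - 1) * g := by
    zify [show 2 ≤ n by omega, show 1 ≤ n by omega]
    nlinarith [hngZ]
  have h2Z : ((n:ℤ) - 2) * f ≤ ((n:ℤ) - 1) * g := by
    have := h2
    zify [show 2 ≤ n by omega, show 1 ≤ n by omega] at this
    exact this
  have hPZ : ((p:ℤ)) ^ α = (s:ℤ) * f + t * g := by exact_mod_cast hpst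
  refine ⟨?_, ?_, ?_, ?_, ?_⟩
  · -- the vector identity
    set A : Fin n → ℤ := ∑ i : Fin (n - 1), Pi.single (Fin.castLE (by omega) i) (1 : ℤ) with hA
    set B : Fin n → ℤ := Pi.single (⟨n - 1, by omega⟩ : Fin n) (1 : ℤ) with hB
    have hsv : (∑ i : Fin (n - 1), v (Fin.castLE (by omega) i)) = ((f:ℤ) * g) • A := by
      rw [hA, Finset.smul_sum]
      refine Finset.sum_congr rfl fun i _ => ?_
      rw [hv, ← Pi.single_smul, smul_eq_mul, mul_one]
      push_cast; rfl
    have hvn : v ⟨n - 1, by omega⟩ = ((f:ℤ) * g) • B := by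
      rw [hv, hB, ← Pi.single_smul, smul_eq_mul, mul_one]; push_cast; rfl
    have hsw : (∑ i : Fin (n - 1), w i) = ((f:ℤ) - g) • (A + ((n:ℤ) - 1) • B) := by
      have hcard : (Finset.univ : Finset (Fin (n-1))).card = n - 1 := by simp
      calc (∑ i : Fin (n - 1), w i)
          = ∑ i : Fin (n - 1), ((f : ℤ) - (g : ℤ)) •
              ((Pi.single (Fin.castLE (by omega) i) (1 : ℤ) : Fin n → ℤ) + B) := by
            exact Finset.sum_congr rfl fun i _ => hw i
        _ = ((f:ℤ) - g) • (A + ((n:ℤ) - 1) • B) := by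
            rw [← Finset.smul_sum, hA, Finset.sum_add_distrib, Finset.sum_const, hcard]
            congr 1
            congr 1
            rw [← Nat.cast_smul_eq_nsmul ℤ]
            congr 1
            omega
    have hP : ((p ^ α : ℕ) : ℤ) = (s:ℤ) * f + t * g := by exact_mod_cast hpst
    rw [hsv, hvn, hsw, hwn, hP]
    module
  · -- nonnegativity of the first coefficient
    have h2gZ : (f:ℤ) ≤ 2 * g := by exact_mod_cast h2g
    have := mul_nonneg (show (0:ℤ) ≤ t by positivity) (show (0:ℤ) ≤ 2 * g - f by linarith)
    have := mul_nonneg (show (0:ℤ) ≤ s by positivity) (show (0:ℤ) ≤ g by positivity)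
    linarith
  · -- nonnegativity of the second coefficient
    have := mul_nonneg (show (0:ℤ) ≤ s by positivity)
      (show (0:ℤ) ≤ ((n:ℤ) - 1) * g - ((n:ℤ) - 2) * f by linarith)
    have := mul_nonneg (show (0:ℤ) ≤ t by positivity)
      (show (0:ℤ) ≤ (n:ℤ) * g - ((n:ℤ) - 1) * f by linarith)
    linarith
  · -- nonnegativity of the third coefficient
    have h1 : (0:ℤ) ≤ (f:ℤ) - g := by
      have : (g:ℤ) ≤ f := by exact_mod_cast hgf.le
      linarith
    have := mul_nonneg (mul_nonneg (show (0:ℤ) ≤ t by positivity)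
      (show (0:ℤ) ≤ g by positivity)) h1
    linarith
  · -- kernel membership
    have hE : g ^ 2 * p ^ α =
        f * g * (s * g + t * (2 * g - f)) + (f - g) * (t * g * (f - g)) := by
      zify [h2g, hgf.le]
      linear_combination (g:ℤ)^2 * hPZ
    have hF : g * ((n - 1) * g - (n - 2) * f) * p ^ α =
        f * g * (s * ((n - 1) * g - (n - 2) * f) + t * (n * g - (n - 1) * f)) +
          (f - g) * (n - 1) * (t * g * (f - g)) := by
      zify [h2, hng, hgf.le, show 1 ≤ n by omega, show 2 ≤ n by omega]
      linear_combination ((g:ℤ) * (((n:ℤ) - 1) * g - ((n:ℤ) - 2) * f)) * hPZ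
    rw [RingHom.mem_ker, map_sub, sub_eq_zero, map_pow, hφyn, map_mul, map_mul, map_pow,
      map_pow, map_pow, map_prod, map_prod]
    simp_rw [hφx, hφy]
    simp only [Finset.prod_mul_distrib, Finset.prod_pow, Finset.prod_const, Finset.card_univ,
      Fintype.card_fin]
    rw [mul_pow, mul_pow, ← pow_mul, ← pow_mul, ← pow_mul, ← pow_mul, ← pow_mul, ← pow_mul,
      ← pow_mul]
    rw [hE, hF, pow_add, pow_add]
    ring
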